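/- If A is an n-by-n TP_{k+2} matrix, then every 2-by-2 contiguous minor of the kth Dodgson condensation matrix D_k(A) factors as det D_k(A)[{i,i+1},{j,j+1}] = det A[{i,...,i+k+1},{j,...,j+k+1}] · det A[{i+1,...,i+k},{j+1,...,j+k}], and consequently is positive. -/

import Mathlib

open Matrix

open Matrix

/-- `A` is totally positive: every minor (with strictly increasing row and
column index selections) is positive. -/
def IsTP {α β : Type} [LinearOrder α] [LinearOrder β] (A : Matrix α β ℝ) : Prop :=
  ∀ (l : ℕ) (r : Fin l → α) (c : Fin l → β), StrictMono r → StrictMono c →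
    0 < (A.submatrix r c).det

/-- `A` is `TP_k`: every minor of order at most `k` is positive. -/
def IsTPk {α β : Type} [LinearOrder α] [LinearOrder β] (A : Matrix α β ℝ) (k : ℕ) : Prop :=
  ∀ (l : ℕ), l ≤ k → ∀ (r : Fin l → α) (c : Fin l → β), StrictMono r → StrictMono c →
    0 < (A.submatrix r c).det

/-- `k`-subsets of `{1,…,n}`, encoded as strictly increasing tuples. -/
abbrev STuple (n k : ℕ) : Type := {f : Fin k → Fin n // StrictMono f}

noncomputable instance lexPi {n k : ℕ} : LinearOrder (Lex (Fin k → Fin n)) :=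
  @Pi.Lex.linearOrder (Fin k) (fun _ => Fin n) _
    Finite.to_wellFoundedLT _

/-- The lexicographic linear order on `k`-subsets. -/
noncomputable instance {n k : ℕ} : LinearOrder (STuple n k) :=
  LinearOrder.lift' (fun s => toLex s.1) (fun _ _ h => Subtype.ext (congrArg ofLex h))

/-- The `k`-th compound matrix of `A`: the matrix of all `k×k` minors of `A`,
rows and columns indexed by `k`-subsets ordered lexicographically. -/
noncomputable def compound {n : ℕ} (A : Matrix (Fin n) (Fin n) ℝ) (k : ℕ) :
    Matrix (STuple n k) (STuple n k) ℝ :=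
  fun s t => (A.submatrix s.1 t.1).det

/-- The `k`-th Dodgson condensation matrix of `A`: the `(n-k) × (n-k)` matrix of
contiguous minors of order `k+1` (0-indexed positions). -/
noncomputable def Dmat {n : ℕ} (A : Matrix (Fin n) (Fin n) ℝ) (k : ℕ) :
    Matrix (Fin (n - k)) (Fin (n - k)) ℝ :=
  fun i j =>
    (A.submatrix
      (fun p : Fin (k + 1) => (⟨i.1 + p.1, by have := i.2; have := p.2; omega⟩ : Fin n))
      (fun p : Fin (k + 1) => (⟨j.1 + p.1, by have := j.2; have := p.2; omega⟩ : Fin n))).det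

/-- The contiguous minor of `A` of order `sz` with top-left position `(i, j)`
(0-indexed): `det A[{i,…,i+sz-1},{j,…,j+sz-1}]`. -/
noncomputable def cminor {n : ℕ} (A : Matrix (Fin n) (Fin n) ℝ) (sz i j : ℕ)
    (hi : i + sz ≤ n) (hj : j + sz ≤ n) : ℝ :=
  (A.submatrix (fun p : Fin sz => (⟨i + p.1, by have := p.2; omega⟩ : Fin n))
               (fun p : Fin sz => (⟨j + p.1, by have := p.2; omega⟩ : Fin n))).det

lemma detRow_expand {N : ℕ} (A : Matrix (Fin N) (Fin N) ℝ) (j : Fin N) (v : Fin N → ℝ) :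
    (A.updateRow j v).det = ∑ i, v i * (A.updateRow j (Pi.single i 1)).det := by
  have hv : v = ∑ i, v i • (Pi.single i (1 : ℝ) : Fin N → ℝ) := by
    funext k
    simp [Pi.single_apply]
  calc (A.updateRow j v).det
      = Matrix.detRowAlternating (Function.update A j (∑ i, v i • (Pi.single i (1:ℝ) : Fin N → ℝ))) := by
        rw [← hv]; rfl
    _ = ∑ i, v i * (A.updateRow j (Pi.single i 1)).det := by
        erw [AlternatingMap.map_update_sum]
        refine Finset.sum_congr rfl fun i _ => ?_
        erw [AlternatingMap.map_update_smul]
        rfl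

lemma updateRow_comm' {N : ℕ} (A : Matrix (Fin N) (Fin N) ℝ) {i j : Fin N} (h : i ≠ j)
    (u v : Fin N → ℝ) :
    (A.updateRow i u).updateRow j v = (A.updateRow j v).updateRow i u := by
  ext a b
  by_cases h1 : a = i
  · subst h1; simp [Matrix.updateRow_apply, h]
  · by_cases h2 : a = j <;> simp [Matrix.updateRow_apply, h1, h2, Ne.symm h]

lemma det_corner {m : ℕ} (i i' : Fin (m + 2)) :
    (((1 : Matrix (Fin (m+2)) (Fin (m+2)) ℝ).updateRow (Fin.last (m+1))
        (Pi.single i 1)).updateRow 0 (Pi.single i' 1)).det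
      = (if i = Fin.last (m+1) then 1 else 0) * (if i' = 0 then 1 else 0)
        - (if i = 0 then 1 else 0) * (if i' = Fin.last (m+1) then 1 else 0) := by
  have h0l : (0 : Fin (m+2)) ≠ Fin.last (m+1) := by
    simp [Fin.ext_iff]
  set M := ((1 : Matrix (Fin (m+2)) (Fin (m+2)) ℝ).updateRow (Fin.last (m+1))
      (Pi.single i 1)).updateRow 0 (Pi.single i' 1) with hMdef
  have hrow0 : M 0 = Pi.single i' 1 := by simp [hMdef]
  have hrowl : M (Fin.last (m+1)) = Pi.single i 1 := by
    simp [hMdef, Matrix.updateRow_apply, h0l.symm]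
  have hrowmid : ∀ a : Fin (m+2), a ≠ 0 → a ≠ Fin.last (m+1) → M a = Pi.single a 1 := by
    intro a ha0 hal
    funext b
    simp [hMdef, Matrix.updateRow_apply, ha0, hal, Matrix.one_apply, Pi.single_apply, eq_comm]
  by_cases hii : i' = i
  · subst hii
    rw [Matrix.det_zero_of_row_eq h0l (hrow0.trans hrowl.symm)]
    rcases eq_or_ne i' 0 with rfl | h1
    · simp [h0l.symm, Ne.symm h0l]
    · simp [h1]
  · by_cases hi'0 : i' = 0
    · subst hi'0
      by_cases hil : i = Fin.last (m+1)
      · subst hil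
        have : M = 1 := by
          funext a b
          by_cases ha0 : a = 0
          · subst ha0; rw [hrow0]; simp [Matrix.one_apply, Pi.single_apply, eq_comm]
          · by_cases hal : a = Fin.last (m+1)
            · subst hal; rw [hrowl]; simp [Matrix.one_apply, Pi.single_apply, eq_comm]
            · rw [hrowmid a ha0 hal]; simp [Matrix.one_apply, Pi.single_apply, eq_comm]
        rw [this, Matrix.det_one]
        simp [h0l.symm]
      · -- i ≠ last, i ≠ i' = 0, so i is a middle row duplicated with row last
        have hi0 : i ≠ 0 := fun h => hii (h.symm ▸ rfl)
        rw [Matrix.det_zero_of_row_eq (show Fin.last (m+1) ≠ i from fun h => hil h.symm)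
          (hrowl.trans (hrowmid i hi0 hil).symm)]
        simp [hil, Ne.symm h0l]
    · by_cases hi'l : i' = Fin.last (m+1)
      · subst hi'l
        by_cases hi0 : i = 0
        · subst hi0
          have : M = (1 : Matrix (Fin (m+2)) (Fin (m+2)) ℝ).submatrix
              (Equiv.swap 0 (Fin.last (m+1))) id := by
            funext a b
            by_cases ha0 : a = 0
            · subst ha0
              rw [hrow0]
              simp [Matrix.one_apply, Pi.single_apply, Equiv.swap_apply_left, eq_comm]
            · by_cases hal : a = Fin.last (m+1)
              · subst hal
                rw [hrowl]
                simp [Matrix.one_apply, Pi.single_apply, Equiv.swap_apply_right, eq_comm]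
              · rw [hrowmid a ha0 hal]
                simp [Matrix.submatrix_apply, Equiv.swap_apply_of_ne_of_ne ha0 hal,
                  Matrix.one_apply, Pi.single_apply, eq_comm]
          rw [this, Matrix.det_permute, Matrix.det_one, Equiv.Perm.sign_swap h0l]
          simp [h0l, Ne.symm h0l]
        · have hil : i ≠ Fin.last (m+1) := fun h => hii (h ▸ rfl)
          rw [Matrix.det_zero_of_row_eq (show Fin.last (m+1) ≠ i from fun h => hil h.symm)
            (hrowl.trans (hrowmid i hi0 hil).symm)]
          simp [hi0, hil]
      · -- i' middle: rows 0 and i' equal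
        rw [Matrix.det_zero_of_row_eq (show (0 : Fin (m+2)) ≠ i' from fun h => hi'0 h.symm)
          (hrow0.trans (hrowmid i' hi'0 hi'l).symm)]
        simp [hi'0, hi'l]

lemma det_double_update {m : ℕ} (u v : Fin (m+2) → ℝ) :
    (((1 : Matrix (Fin (m+2)) (Fin (m+2)) ℝ).updateRow 0 u).updateRow (Fin.last (m+1)) v).det
      = u 0 * v (Fin.last (m+1)) - u (Fin.last (m+1)) * v 0 := by
  have h0l : (0 : Fin (m+2)) ≠ Fin.last (m+1) := by simp [Fin.ext_iff]
  rw [detRow_expand]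
  have step : ∀ ii : Fin (m+2),
      (((1 : Matrix (Fin (m+2)) (Fin (m+2)) ℝ).updateRow 0 u).updateRow (Fin.last (m+1))
        (Pi.single ii 1)).det
      = u 0 * (if ii = Fin.last (m+1) then 1 else 0)
        - u (Fin.last (m+1)) * (if ii = 0 then 1 else 0) := by
    intro ii
    rw [updateRow_comm' _ h0l, detRow_expand]
    have : ∀ i' : Fin (m+2),
        (((1 : Matrix (Fin (m+2)) (Fin (m+2)) ℝ).updateRow (Fin.last (m+1))
          (Pi.single ii 1)).updateRow 0 (Pi.single i' 1)).det
        = (if ii = Fin.last (m+1) then 1 else 0) * (if i' = 0 then 1 else 0)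
          - (if ii = 0 then 1 else 0) * (if i' = Fin.last (m+1) then 1 else 0) :=
      fun i' => det_corner ii i'
    simp only [this]
    simp only [mul_sub]
    rw [Finset.sum_sub_distrib]
    simp [mul_ite, mul_one, mul_zero, Finset.sum_ite_eq', ite_mul, zero_mul]
  simp only [step]
  simp only [mul_sub]
  rw [Finset.sum_sub_distrib]
  simp [mul_ite, mul_one, mul_zero, Finset.sum_ite_eq', ite_mul, zero_mul, mul_comm]

lemma updateColumn_comm' {N : ℕ} (A : Matrix (Fin N) (Fin N) ℝ) {i j : Fin N} (h : i ≠ j)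
    (u v : Fin N → ℝ) :
    (A.updateCol i u).updateCol j v = (A.updateCol j v).updateCol i u := by
  ext a b
  by_cases h1 : b = i
  · subst h1; simp [Matrix.updateCol_apply, h, Ne.symm h]
  · by_cases h2 : b = j <;> simp [Matrix.updateCol_apply, h1, h2, Ne.symm h]

lemma desnanot {m : ℕ} (M : Matrix (Fin (m+2)) (Fin (m+2)) ℝ) (hM : M.det ≠ 0) :
    det (M.submatrix Fin.castSucc Fin.castSucc) * det (M.submatrix Fin.succ Fin.succ)
      - det (M.submatrix Fin.castSucc Fin.succ) * det (M.submatrix Fin.succ Fin.castSucc)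
      = M.det * det (M.submatrix (fun p : Fin m => p.castSucc.succ)
          (fun p : Fin m => p.castSucc.succ)) := by
  have h0l : (0 : Fin (m+2)) ≠ Fin.last (m+1) := by simp [Fin.ext_iff]
  set u : Fin (m+2) → ℝ := fun l => adjugate M l 0 with hu
  set v : Fin (m+2) → ℝ := fun l => adjugate M l (Fin.last (m+1)) with hv
  set B : Matrix (Fin (m+2)) (Fin (m+2)) ℝ :=
    ((1 : Matrix (Fin (m+2)) (Fin (m+2)) ℝ).updateCol 0 u).updateCol (Fin.last (m+1)) v
    with hB
  -- determinant of B
  have hdetB : B.det = u 0 * v (Fin.last (m+1)) - u (Fin.last (m+1)) * v 0 := by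
    rw [← Matrix.det_transpose, hB]
    rw [← Matrix.updateRow_transpose, ← Matrix.updateRow_transpose, Matrix.transpose_one]
    exact det_double_update u v
  -- M * B
  set C : Matrix (Fin (m+2)) (Fin (m+2)) ℝ :=
    (M.updateCol 0 (M.det • (Pi.single 0 1 : Fin (m+2) → ℝ))).updateCol (Fin.last (m+1))
      (M.det • (Pi.single (Fin.last (m+1)) 1 : Fin (m+2) → ℝ)) with hC
  have hMB : M * B = C := by
    ext a b
    rw [Matrix.mul_apply]
    by_cases hb0 : b = 0
    · subst hb0
      have : ∀ l, B l 0 = adjugate M l 0 := by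
        intro l; simp [hB, hu, Matrix.updateCol_apply, Ne.symm h0l]
      simp only [this]
      rw [← Matrix.mul_apply, Matrix.mul_adjugate]
      simp [hC, Matrix.updateCol_apply, Ne.symm h0l, Matrix.one_apply, Pi.single_apply]
    · by_cases hbl : b = Fin.last (m+1)
      · subst hbl
        have : ∀ l, B l (Fin.last (m+1)) = adjugate M l (Fin.last (m+1)) := by
          intro l; simp [hB, hv, Matrix.updateCol_apply]
        simp only [this]
        rw [← Matrix.mul_apply, Matrix.mul_adjugate]
        simp [hC, Matrix.updateCol_apply, Matrix.one_apply, Pi.single_apply]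
      · have : ∀ l, B l b = (1 : Matrix (Fin (m+2)) (Fin (m+2)) ℝ) l b := by
          intro l; simp [hB, Matrix.updateCol_apply, hb0, hbl]
        simp only [this]
        rw [← Matrix.mul_apply, Matrix.mul_one]
        simp [hC, Matrix.updateCol_apply, hb0, hbl]
  -- the matrix E with unit columns at both ends
  set E : Matrix (Fin (m+2)) (Fin (m+2)) ℝ :=
    (M.updateCol (Fin.last (m+1)) (Pi.single (Fin.last (m+1)) 1)).updateCol 0
      (Pi.single 0 1) with hE
  have hdetC : C.det = M.det * (M.det * E.det) := by
    rw [hC, Matrix.det_updateCol_smul]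
    congr 1
    rw [updateColumn_comm' _ h0l, Matrix.det_updateCol_smul]
  -- E's determinant is the central minor
  have hdetE : E.det = det (M.submatrix (fun p : Fin m => p.castSucc.succ)
      (fun p : Fin m => p.castSucc.succ)) := by
    have col0 : ∀ a : Fin (m+2), E a 0 = if a = 0 then 1 else 0 := by
      intro a; simp [hE, Matrix.updateCol_apply, Pi.single_apply]
    rw [Matrix.det_succ_column_zero E]
    rw [Finset.sum_eq_single_of_mem (0 : Fin (m+2)) (Finset.mem_univ _)
      (fun a _ ha => by rw [col0 a, if_neg ha]; ring)]
    rw [col0 0, if_pos rfl]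
    simp only [Fin.val_zero, pow_zero, one_mul, mul_one, Fin.succAbove_zero]
    set F : Matrix (Fin (m+1)) (Fin (m+1)) ℝ := E.submatrix Fin.succ Fin.succ with hF
    have collast : ∀ a : Fin (m+1), F a (Fin.last m) = if a = Fin.last m then 1 else 0 := by
      intro a
      have : (Fin.last m).succ = Fin.last (m+1) := by simp [Fin.ext_iff]
      simp only [hF, Matrix.submatrix_apply, this]
      have ha : a.succ ≠ 0 := Fin.succ_ne_zero a
      simp [hE, Matrix.updateCol_apply, ha, Pi.single_apply, Fin.ext_iff]
    rw [Matrix.det_succ_column F (Fin.last m)]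
    rw [Finset.sum_eq_single_of_mem (Fin.last m) (Finset.mem_univ _)
      (fun a _ ha => by rw [collast a, if_neg ha]; ring)]
    rw [collast (Fin.last m), if_pos rfl]
    have hsign : (-1 : ℝ) ^ ((Fin.last m : ℕ) + (Fin.last m : ℕ)) = 1 := by
      rw [← two_mul, pow_mul]; norm_num
    rw [hsign]
    simp only [one_mul, mul_one, Fin.succAbove_last]
    congr 1
    ext p q
    have hne0 : (q.castSucc.succ : Fin (m+2)) ≠ 0 := Fin.succ_ne_zero _
    have hnel : (q.castSucc.succ : Fin (m+2)) ≠ Fin.last (m+1) := by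
      simp [Fin.ext_iff]; omega
    simp [hF, hE, Matrix.submatrix_apply, Matrix.updateCol_apply, hne0, hnel]
  -- combine
  have hcancel : B.det = M.det * det (M.submatrix (fun p : Fin m => p.castSucc.succ)
      (fun p : Fin m => p.castSucc.succ)) := by
    have h1 : M.det * B.det = M.det * (M.det * E.det) := by
      rw [← Matrix.det_mul, hMB, hdetC]
    have := mul_left_cancel₀ hM h1
    rw [this, hdetE]
  rw [← hcancel, hdetB]
  -- now rewrite the adjugate entries as minors
  have hadj : ∀ a b : Fin (m+2), adjugate M a b
      = (-1 : ℝ) ^ ((b : ℕ) + (a : ℕ)) * det (M.submatrix b.succAbove a.succAbove) :=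
    fun a b => Matrix.adjugate_fin_succ_eq_det_submatrix M a b
  have hu0 : u 0 = det (M.submatrix Fin.succ Fin.succ) := by
    simp only [hu]; rw [hadj]; simp
  have hvl : v (Fin.last (m+1)) = det (M.submatrix Fin.castSucc Fin.castSucc) := by
    simp only [hv]; rw [hadj]
    have hsign : (-1 : ℝ) ^ ((Fin.last (m+1) : ℕ) + (Fin.last (m+1) : ℕ)) = 1 := by
      rw [← two_mul, pow_mul]; norm_num
    rw [hsign]
    simp
  have hul : u (Fin.last (m+1)) = (-1 : ℝ) ^ (m+1) * det (M.submatrix Fin.succ Fin.castSucc) := by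
    simp only [hu]; rw [hadj]; simp
  have hv0 : v 0 = (-1 : ℝ) ^ (m+1) * det (M.submatrix Fin.castSucc Fin.succ) := by
    simp only [hv]; rw [hadj]; simp
  rw [hu0, hvl, hul, hv0]
  have hsq : (-1 : ℝ) ^ (m+1) * (-1 : ℝ) ^ (m+1) = 1 := by
    rw [← pow_add, ← two_mul, pow_mul]; norm_num
  rw [mul_mul_mul_comm, hsq, one_mul]
  ring

lemma det_index_eq {n l : ℕ} (A : Matrix (Fin n) (Fin n) ℝ) (r c r' c' : Fin l → Fin n)
    (hr : ∀ p, (r p).1 = (r' p).1) (hc : ∀ p, (c p).1 = (c' p).1) :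
    det (A.submatrix r c) = det (A.submatrix r' c') := by
  have h1 : r = r' := funext fun p => Fin.ext (hr p)
  have h2 : c = c' := funext fun p => Fin.ext (hc p)
  rw [h1, h2]

/-- If `A` is `TP_{k+2}` then every `2×2` contiguous minor of `D_k(A)` factors as
`det D_k(A)[{i,i+1},{j,j+1}] = det A[{i,…,i+k+1},{j,…,j+k+1}] · det A[{i+1,…,i+k},{j+1,…,j+k}]`,
and consequently is positive. -/
theorem Dmat_two_by_two_contiguous_minor {n k : ℕ} (A : Matrix (Fin n) (Fin n) ℝ)
    (hA : IsTPk A (k + 2)) (i j : ℕ) (hi : i + k + 2 ≤ n) (hj : j + k + 2 ≤ n) :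
    ((Dmat A k).submatrix
        (fun p : Fin 2 => (⟨i + p.1, by have := p.2; omega⟩ : Fin (n - k)))
        (fun p : Fin 2 => (⟨j + p.1, by have := p.2; omega⟩ : Fin (n - k)))).det
      = cminor A (k + 2) i j hi hj * cminor A k (i + 1) (j + 1) (by omega) (by omega) ∧
    0 < ((Dmat A k).submatrix
        (fun p : Fin 2 => (⟨i + p.1, by have := p.2; omega⟩ : Fin (n - k)))
        (fun p : Fin 2 => (⟨j + p.1, by have := p.2; omega⟩ : Fin (n - k)))).det := by
  set M : Matrix (Fin (k+2)) (Fin (k+2)) ℝ := A.submatrix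
      (fun p : Fin (k+2) => (⟨i + p.1, by have := p.2; omega⟩ : Fin n))
      (fun p : Fin (k+2) => (⟨j + p.1, by have := p.2; omega⟩ : Fin n)) with hM
  have hmono : ∀ (l c0 : ℕ) (h : c0 + l ≤ n),
      StrictMono (fun p : Fin l => (⟨c0 + p.1, by have := p.2; omega⟩ : Fin n)) := by
    intro l c0 h a b hab
    have h2 : a.1 < b.1 := hab
    exact Fin.mk_lt_mk.mpr (by omega)
  have hMdet : 0 < M.det := hA (k+2) le_rfl _ _ (hmono (k+2) i (by omega)) (hmono (k+2) j (by omega))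
  have hMc : M.det = cminor A (k+2) i j hi hj := rfl
  have hinner : det (M.submatrix (fun p : Fin k => p.castSucc.succ)
      (fun p : Fin k => p.castSucc.succ)) = cminor A k (i+1) (j+1) (by omega) (by omega) := by
    rw [hM, Matrix.submatrix_submatrix, cminor]
    exact det_index_eq A _ _ _ _ (fun p => by simp only [Function.comp_apply, Fin.coe_castSucc, Fin.val_succ]; try omega)
      (fun p => by simp only [Function.comp_apply, Fin.coe_castSucc, Fin.val_succ]; try omega)
  have hinnerpos : 0 < cminor A k (i+1) (j+1) (by omega) (by omega) := by
    rw [cminor]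
    exact hA k (by omega) _ _ (hmono k (i+1) (by omega)) (hmono k (j+1) (by omega))
  -- identify the four Dmat entries with corner minors of M
  have hcc : det (M.submatrix Fin.castSucc Fin.castSucc)
      = Dmat A k ⟨i, by omega⟩ ⟨j, by omega⟩ := by
    rw [hM, Matrix.submatrix_submatrix, Dmat]
    exact det_index_eq A _ _ _ _ (fun p => by simp only [Function.comp_apply, Fin.coe_castSucc, Fin.val_succ]; try omega)
      (fun p => by simp only [Function.comp_apply, Fin.coe_castSucc, Fin.val_succ]; try omega)
  have hss : det (M.submatrix Fin.succ Fin.succ)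
      = Dmat A k ⟨i+1, by omega⟩ ⟨j+1, by omega⟩ := by
    rw [hM, Matrix.submatrix_submatrix, Dmat]
    exact det_index_eq A _ _ _ _ (fun p => by simp only [Function.comp_apply, Fin.coe_castSucc, Fin.val_succ]; try omega)
      (fun p => by simp only [Function.comp_apply, Fin.coe_castSucc, Fin.val_succ]; try omega)
  have hcs : det (M.submatrix Fin.castSucc Fin.succ)
      = Dmat A k ⟨i, by omega⟩ ⟨j+1, by omega⟩ := by
    rw [hM, Matrix.submatrix_submatrix, Dmat]
    exact det_index_eq A _ _ _ _ (fun p => by simp only [Function.comp_apply, Fin.coe_castSucc, Fin.val_succ]; try omega)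
      (fun p => by simp only [Function.comp_apply, Fin.coe_castSucc, Fin.val_succ]; try omega)
  have hsc : det (M.submatrix Fin.succ Fin.castSucc)
      = Dmat A k ⟨i+1, by omega⟩ ⟨j, by omega⟩ := by
    rw [hM, Matrix.submatrix_submatrix, Dmat]
    exact det_index_eq A _ _ _ _ (fun p => by simp only [Function.comp_apply, Fin.coe_castSucc, Fin.val_succ]; try omega)
      (fun p => by simp only [Function.comp_apply, Fin.coe_castSucc, Fin.val_succ]; try omega)
  have hdj := desnanot M (ne_of_gt hMdet)
  rw [hcc, hss, hcs, hsc, hMc, hinner] at hdj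
  have h2 : ((Dmat A k).submatrix
        (fun p : Fin 2 => (⟨i + p.1, by have := p.2; omega⟩ : Fin (n - k)))
        (fun p : Fin 2 => (⟨j + p.1, by have := p.2; omega⟩ : Fin (n - k)))).det
      = Dmat A k ⟨i, by omega⟩ ⟨j, by omega⟩ * Dmat A k ⟨i+1, by omega⟩ ⟨j+1, by omega⟩
        - Dmat A k ⟨i, by omega⟩ ⟨j+1, by omega⟩ * Dmat A k ⟨i+1, by omega⟩ ⟨j, by omega⟩ := by
    rw [Matrix.det_fin_two]
    rfl
  constructor
  · rw [h2, hdj]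
  · rw [h2, hdj]
    exact mul_pos (hMc ▸ hMdet) hinnerpos
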